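/- Let G be a group and suppose x ∈ γ_2(G) = G'. Then for any elements g_p, g_q ∈ G, the congruence (g_q, (g_p, x)) ≡ (g_p, (g_q, x)) mod (G', G') holds. -/

import Mathlib

/-- The group commutator with the convention `(a, b) = a⁻¹ b⁻¹ a b`. -/
def gcomm {G : Type*} [Group G] (a b : G) : G := a⁻¹ * b⁻¹ * a * b

open scoped commutatorElement

lemma gcomm_mem_commutator {Q : Type*} [Group Q] (a b : Q) : gcomm a b ∈ commutator Q := by
  have : gcomm a b = ⁅a⁻¹, b⁻¹⁆ := by
    simp [gcomm, commutatorElement_def]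
  rw [this, commutator_def]
  exact Subgroup.commutator_mem_commutator (Subgroup.mem_top _) (Subgroup.mem_top _)

/-- In a group whose derived subgroup is abelian (imposed here via the hypothesis `hc`),
`(g_q, (g_p, x)) = (g_p, (g_q, x))` for `x` in the derived subgroup. -/
lemma key {Q : Type*} [Group Q]
    (hc : ∀ a b : Q, a ∈ commutator Q → b ∈ commutator Q → a * b = b * a)
    (x : Q) (hx : x ∈ commutator Q) (gp gq : Q) :
    gcomm gq (gcomm gp x) = gcomm gp (gcomm gq x) := by
  set u := gcomm gp x with hu_def
  set v := gcomm gq x with hv_def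
  set w := gcomm gp gq with hw_def
  have hC : (commutator Q).Normal := inferInstance
  have hu : u ∈ commutator Q := gcomm_mem_commutator _ _
  have hv : v ∈ commutator Q := gcomm_mem_commutator _ _
  have hw : w ∈ commutator Q := gcomm_mem_commutator _ _
  have hvg : gp⁻¹ * v * gp ∈ commutator Q := hC.conj_mem' v hv gp
  have e1 : gcomm gq u =
      v * (x⁻¹ * w * x)⁻¹ * u⁻¹ * (gp⁻¹ * v * gp)⁻¹ * w * u := by
    simp only [hu_def, hv_def, hw_def, gcomm]
    group
  have e2 : x⁻¹ * w * x = w := by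
    have h := hc x w hx hw
    rw [mul_assoc, ← h, ← mul_assoc, inv_mul_cancel, one_mul]
  have e3 : gcomm gp v = (gp⁻¹ * v * gp)⁻¹ * v := by
    simp only [gcomm]; group
  rw [e1, e2, e3]
  set vg := gp⁻¹ * v * gp with hvg_def
  have c1 : Commute vg w := hc vg w hvg hw
  have c2 : Commute vg u := hc vg u hvg hu
  have c3 : Commute w u := hc w u hw hu
  have c4 : Commute vg v := hc vg v hvg hv
  have cuv : Commute u⁻¹ vg⁻¹ := c2.symm.inv_left.inv_right
  have cwv : Commute w⁻¹ vg⁻¹ := c1.symm.inv_left.inv_right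
  have cvvg : Commute v vg⁻¹ := c4.symm.inv_right
  have cu : Commute u⁻¹ w := c3.symm.inv_left
  simp only [mul_assoc]
  rw [cuv.left_comm, cwv.left_comm, cvvg.left_comm, cu.left_comm]
  group

lemma map_gcomm {G H : Type*} [Group G] [Group H] (f : G →* H) (a b : G) :
    f (gcomm a b) = gcomm (f a) (f b) := by simp [gcomm]

/-- For `x ∈ G' = γ₂(G)`, `(g_q, (g_p, x)) ≡ (g_p, (g_q, x))` modulo `(G', G')`. -/
theorem swap_mod_second_derived {G : Type*} [Group G] (x : G) (hx : x ∈ commutator G)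
    (gp gq : G) :
    gcomm gq (gcomm gp x) * (gcomm gp (gcomm gq x))⁻¹ ∈
      ⁅commutator G, commutator G⁆ := by
  set N : Subgroup G := ⁅commutator G, commutator G⁆ with hN_def
  rw [← QuotientGroup.eq_one_iff]
  set π : G →* G ⧸ N := QuotientGroup.mk' N with hπ_def
  have hsurj : Function.Surjective π := QuotientGroup.mk'_surjective N
  have hmapcomm : Subgroup.map π (commutator G) = commutator (G ⧸ N) := by
    have h := Subgroup.map_commutator (⊤ : Subgroup G) ⊤ π
    rw [Subgroup.map_top_of_surjective π hsurj] at h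
    exact h
  have hc : ∀ a b : G ⧸ N, a ∈ commutator (G ⧸ N) → b ∈ commutator (G ⧸ N) →
      a * b = b * a := by
    intro a b ha hb
    have h1 : ⁅a, b⁆ ∈ ⁅commutator (G ⧸ N), commutator (G ⧸ N)⁆ :=
      Subgroup.commutator_mem_commutator ha hb
    rw [← hmapcomm, ← Subgroup.map_commutator, ← hN_def] at h1
    have h3 : ⁅a, b⁆ = 1 := by
      obtain ⟨g, hg, hgeq⟩ := h1
      rw [← hgeq]
      exact (QuotientGroup.eq_one_iff g).mpr hg
    exact (commutatorElement_eq_one_iff_commute.mp h3).eq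
  have hxQ : π x ∈ commutator (G ⧸ N) := by
    rw [← hmapcomm]
    exact Subgroup.mem_map_of_mem π hx
  have hkey := key hc (π x) hxQ (π gp) (π gq)
  show π (gcomm gq (gcomm gp x) * (gcomm gp (gcomm gq x))⁻¹) = 1
  rw [map_mul, map_inv, map_gcomm, map_gcomm, map_gcomm, map_gcomm, hkey]
  exact mul_inv_cancel _
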